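/- arXiv:1802.02628 — 9 statements merged into one kernel-verified Lean document; each statement's English description precedes it below -/
import Mathlib

section
/- Let X ∈ ℝ^{n×n} have all entries strictly positive, and let α, β ∈ ℝⁿ. Then for every Z ∈ ℝ^{n×n} with Z𝟙 = 0 and Zᵀ𝟙 = 0, the Fisher inner product ⟨(α𝟙ᵀ + 𝟙βᵀ) ⊙ X, Z⟩_X vanishes; that is, matrices of the form (α𝟙ᵀ + 𝟙βᵀ) ⊙ X are orthogonal, in the Fisher metric at X, to the tangent space of the doubly stochastic multinomial manifold. -/
open Matrix

/-- Matrices of the form `(α𝟙ᵀ + 𝟙βᵀ) ⊙ X` are orthogonal, in the Fisher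
metric at an entrywise positive `X`, to the tangent space
`{Z : Z𝟙 = 0, Zᵀ𝟙 = 0}` of the doubly stochastic multinomial manifold. -/
theorem orth_complement_doubly_stochastic (n : ℕ)
    (X : Matrix (Fin n) (Fin n) ℝ) (hX : ∀ i j, 0 < X i j)
    (α β : Fin n → ℝ)
    (Z : Matrix (Fin n) (Fin n) ℝ)
    (hZ1 : Z.mulVec (fun _ => (1 : ℝ)) = 0)
    (hZ2 : Zᵀ.mulVec (fun _ => (1 : ℝ)) = 0) :
    ∑ i, ∑ j,
      ((Matrix.hadamard
          (Matrix.vecMulVec α (fun _ => (1 : ℝ)) +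
            Matrix.vecMulVec (fun _ => (1 : ℝ)) β) X) i j * Z i j) / X i j
      = 0 := by
  have key : ∀ i j, ((Matrix.hadamard
          (Matrix.vecMulVec α (fun _ => (1 : ℝ)) +
            Matrix.vecMulVec (fun _ => (1 : ℝ)) β) X) i j * Z i j) / X i j
      = α i * Z i j + β j * Z i j := by
    intro i j
    simp only [Matrix.hadamard, Matrix.vecMulVec, Matrix.add_apply, Matrix.of_apply]
    have hx : X i j ≠ 0 := (hX i j).ne'
    field_simp
  simp only [key]
  rw [Finset.sum_congr rfl (fun i _ => Finset.sum_add_distrib), Finset.sum_add_distrib]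
  have h1 : ∀ i, ∑ j, α i * Z i j = 0 := by
    intro i
    rw [← Finset.mul_sum]
    have := congrFun hZ1 i
    simp [Matrix.mulVec, dotProduct] at this
    simp [this]
  have h2 : ∑ i, ∑ j, β j * Z i j = 0 := by
    rw [Finset.sum_comm]
    refine Finset.sum_eq_zero fun j _ => ?_
    rw [← Finset.mul_sum]
    have := congrFun hZ2 j
    simp [Matrix.mulVec, dotProduct, Matrix.transpose_apply] at this
    simp [this]
  simp [h1, h2]
end

section
/- Let X ∈ ℝ^{n×n} be symmetric with all entries strictly positive, and let α ∈ ℝⁿ. Then for every symmetric Z ∈ ℝ^{n×n} with Z𝟙 = 0, the Fisher inner product ⟨(α𝟙ᵀ + 𝟙αᵀ) ⊙ X, Z⟩_X vanishes; that is, symmetric matrices of the form (α𝟙ᵀ + 𝟙αᵀ) ⊙ X are orthogonal, in the Fisher metric at X, to the tangent space of the symmetric multinomial manifold. -/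
open Matrix

/-- Symmetric matrices of the form `(α𝟙ᵀ + 𝟙αᵀ) ⊙ X` are orthogonal, in the
Fisher metric at a symmetric entrywise positive `X`, to the tangent space
`{Z symmetric : Z𝟙 = 0}` of the symmetric multinomial manifold. -/
theorem orth_complement_symmetric_multinomial (n : ℕ)
    (X : Matrix (Fin n) (Fin n) ℝ) (hXsym : X = Xᵀ) (hX : ∀ i j, 0 < X i j)
    (α : Fin n → ℝ)
    (Z : Matrix (Fin n) (Fin n) ℝ) (hZsym : Z = Zᵀ)
    (hZ1 : Z.mulVec (fun _ => (1 : ℝ)) = 0) :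
    ∑ i, ∑ j,
      ((Matrix.hadamard
          (Matrix.vecMulVec α (fun _ => (1 : ℝ)) +
            Matrix.vecMulVec (fun _ => (1 : ℝ)) α) X) i j * Z i j) / X i j
      = 0 := by
  have hrow : ∀ i, ∑ j, Z i j = 0 := by
    intro i
    have := congrFun hZ1 i
    simpa [Matrix.mulVec, dotProduct] using this
  have hcol : ∀ j, ∑ i, Z i j = 0 := by
    intro j
    have := hrow j
    calc ∑ i, Z i j = ∑ i, Z j i := by
          refine Finset.sum_congr rfl fun i _ => ?_
          conv_lhs => rw [hZsym]
          rfl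
    _ = 0 := hrow j
  have key : ∀ i j, ((Matrix.hadamard
          (Matrix.vecMulVec α (fun _ => (1 : ℝ)) +
            Matrix.vecMulVec (fun _ => (1 : ℝ)) α) X) i j * Z i j) / X i j
      = α i * Z i j + α j * Z i j := by
    intro i j
    have hx := (hX i j).ne'
    field_simp [Matrix.hadamard, Matrix.vecMulVec, Matrix.add_apply]
    simp only [Matrix.hadamard_apply, Matrix.add_apply, Matrix.vecMulVec_apply]
    ring
  simp only [key]
  rw [Finset.sum_comm (f := fun i j => α i * Z i j + α j * Z i j)]
  simp only [Finset.sum_add_distrib]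
  have h1 : ∑ j, ∑ i, α i * Z i j = 0 := by
    rw [Finset.sum_comm]
    simp [← Finset.mul_sum, hrow]
  have h2 : ∑ j, ∑ i, α j * Z i j = 0 := by
    simp [← Finset.mul_sum, hcol]
  rw [h1, h2, add_zero]
end

section
/- Let X ∈ 𝔻ℙ_n, let Z ∈ ℝ^{n×n} be arbitrary, and suppose α, β ∈ ℝⁿ satisfy the linear system Z𝟙 = α + Xβ and Zᵀ𝟙 = Xᵀα + β. Define Π_X(Z) = Z − (α𝟙ᵀ + 𝟙βᵀ) ⊙ X. Then (i) Π_X(Z)𝟙 = 0 and Π_X(Z)ᵀ𝟙 = 0, i.e. Π_X(Z) lies in the tangent space of 𝔻ℙ_n at X; and (ii) the residual Z − Π_X(Z) is orthogonal, in the Fisher metric at X, to every matrix W with W𝟙 = 0 and Wᵀ𝟙 = 0. Hence Π_X is the orthogonal projection onto the tangent space with respect to the Fisher metric. -/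
open Matrix

/-- Characterization of the orthogonal projection onto the tangent space of
the doubly stochastic multinomial manifold at `X ∈ 𝔻ℙ_n` with respect to the
Fisher metric: given `Z` and `α, β` solving the linear system
`Z𝟙 = α + Xβ`, `Zᵀ𝟙 = Xᵀα + β`, the matrix
`Π_X(Z) = Z − (α𝟙ᵀ + 𝟙βᵀ) ⊙ X` lies in the tangent space and the residual
`Z − Π_X(Z)` is Fisher-orthogonal to every tangent vector. -/
theorem projection_tangent_doubly_stochastic (n : ℕ)
    (X : Matrix (Fin n) (Fin n) ℝ)
    (hXpos : ∀ i j, 0 < X i j)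
    (hXrow : X.mulVec (fun _ => (1 : ℝ)) = fun _ => (1 : ℝ))
    (hXcol : Xᵀ.mulVec (fun _ => (1 : ℝ)) = fun _ => (1 : ℝ))
    (Z : Matrix (Fin n) (Fin n) ℝ) (α β : Fin n → ℝ)
    (hα : Z.mulVec (fun _ => (1 : ℝ)) = α + X.mulVec β)
    (hβ : Zᵀ.mulVec (fun _ => (1 : ℝ)) = Xᵀ.mulVec α + β) :
    (Z - Matrix.hadamard
        (Matrix.vecMulVec α (fun _ => (1 : ℝ)) +
          Matrix.vecMulVec (fun _ => (1 : ℝ)) β) X).mulVec (fun _ => (1 : ℝ)) = 0 ∧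
    (Z - Matrix.hadamard
        (Matrix.vecMulVec α (fun _ => (1 : ℝ)) +
          Matrix.vecMulVec (fun _ => (1 : ℝ)) β) X)ᵀ.mulVec (fun _ => (1 : ℝ)) = 0 ∧
    ∀ W : Matrix (Fin n) (Fin n) ℝ,
      W.mulVec (fun _ => (1 : ℝ)) = 0 → Wᵀ.mulVec (fun _ => (1 : ℝ)) = 0 →
      ∑ i, ∑ j,
        ((Z - (Z - Matrix.hadamard
            (Matrix.vecMulVec α (fun _ => (1 : ℝ)) +
              Matrix.vecMulVec (fun _ => (1 : ℝ)) β) X)) i j * W i j) / X i j = 0 := by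
  refine ⟨?_, ?_, ?_⟩
  · funext i
    have h1 := congrFun hα i
    have h2 := congrFun hXrow i
    simp only [mulVec, dotProduct, Matrix.sub_apply, Matrix.hadamard_apply,
      Matrix.add_apply, vecMulVec_apply, Pi.add_apply, Pi.zero_apply, mul_one] at *
    simp only [Finset.sum_sub_distrib, add_mul, Finset.sum_add_distrib, one_mul]
    have e1 : ∑ x, α i * X i x = α i := by rw [← Finset.mul_sum, h2, mul_one]
    have e2 : ∑ x, β x * X i x = ∑ x, X i x * β x := by
      exact Finset.sum_congr rfl fun x _ => mul_comm _ _
    rw [e1, e2]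
    linarith [h1]
  · funext j
    have h1 := congrFun hβ j
    have h2 := congrFun hXcol j
    simp only [mulVec, dotProduct, Matrix.transpose_apply, Matrix.sub_apply,
      Matrix.hadamard_apply, Matrix.add_apply, vecMulVec_apply, Pi.add_apply,
      Pi.zero_apply, mul_one] at *
    simp only [Finset.sum_sub_distrib, add_mul, Finset.sum_add_distrib, one_mul]
    have e1 : ∑ x, β j * X x j = β j := by rw [← Finset.mul_sum, h2, mul_one]
    have e2 : ∑ x, α x * X x j = ∑ x, X x j * α x := by
      exact Finset.sum_congr rfl fun x _ => mul_comm _ _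
    rw [e1, e2]
    linarith [h1]
  · intro W hW hWt
    have key : ∀ i j, ((Z - (Z - Matrix.hadamard
        (Matrix.vecMulVec α (fun _ => (1 : ℝ)) +
          Matrix.vecMulVec (fun _ => (1 : ℝ)) β) X)) i j * W i j) / X i j
        = (α i + β j) * W i j := by
      intro i j
      have hx := (hXpos i j).ne'
      field_simp [Matrix.sub_apply, Matrix.hadamard_apply, Matrix.add_apply,
        vecMulVec_apply]
      simp only [Matrix.sub_apply, Matrix.hadamard_apply, Matrix.add_apply, vecMulVec_apply]
      ring
    have hWrow : ∀ i, ∑ j, W i j = 0 := fun i => by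
      have := congrFun hW i
      simpa [mulVec, dotProduct] using this
    have hWcol : ∀ j, ∑ i, W i j = 0 := fun j => by
      have := congrFun hWt j
      simpa [mulVec, dotProduct, Matrix.transpose_apply] using this
    simp only [key, add_mul, Finset.sum_add_distrib]
    have h1 : ∑ i, ∑ j, α i * W i j = 0 := by
      simp [← Finset.mul_sum, hWrow]
    have h2 : ∑ i, ∑ j, β j * W i j = 0 := by
      rw [Finset.sum_comm]
      simp [← Finset.mul_sum, hWcol]
    rw [h1, h2, add_zero]
end

section
/- Let X ∈ 𝔻ℙ_n. If α, β ∈ ℝⁿ satisfy α + Xβ = 0 and Xᵀα + β = 0, then there exists a scalar c ∈ ℝ such that α = c𝟙 and β = −c𝟙. In other words, the null space of the 2n×2n block matrix [[I, X], [Xᵀ, I]] is spanned by the vector (𝟙, −𝟙). -/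
open Matrix

/-- A vector fixed by a matrix with positive entries and row sums 1 is constant. -/
lemma const_of_fixed_pos_row_stochastic (n : ℕ)
    (Y : Matrix (Fin n) (Fin n) ℝ)
    (hpos : ∀ i j, 0 < Y i j)
    (hrow : Y.mulVec (fun _ => (1 : ℝ)) = fun _ => (1 : ℝ))
    (v : Fin n → ℝ) (hv : Y.mulVec v = v) :
    ∀ i j, v i = v j := by
  rcases Nat.eq_zero_or_pos n with rfl | hn
  · intro i; exact i.elim0
  have : Nonempty (Fin n) := ⟨⟨0, hn⟩⟩
  obtain ⟨i0, hi0⟩ := Finite.exists_max v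
  have key : ∀ j, v j = v i0 := by
    have hsum : ∑ j, Y i0 j * (v i0 - v j) = 0 := by
      have h1 : ∑ j, Y i0 j * v j = v i0 := by
        have := congrFun hv i0
        simpa [Matrix.mulVec, dotProduct] using this
      have h2 : ∑ j, Y i0 j = 1 := by
        have := congrFun hrow i0
        simpa [Matrix.mulVec, dotProduct] using this
      simp [mul_sub, Finset.sum_sub_distrib, ← Finset.sum_mul, h2, h1]
    intro j
    have hj := (Finset.sum_eq_zero_iff_of_nonneg (fun j _ =>
      mul_nonneg (hpos i0 j).le (sub_nonneg.2 (hi0 j)))).1 hsum j (Finset.mem_univ j)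
    have := mul_eq_zero.1 hj
    rcases this with h | h
    · exact absurd h (hpos i0 j).ne'
    · linarith [sub_eq_zero.1 h]
  intro i j; rw [key i, key j]

/-- For `X ∈ 𝔻ℙ_n`, the null space of the block matrix `[[I, X], [Xᵀ, I]]`
is spanned by `(𝟙, −𝟙)`: if `α + Xβ = 0` and `Xᵀα + β = 0` then
`α = c𝟙` and `β = −c𝟙` for some scalar `c`. -/
theorem null_space_block_matrix_doubly_stochastic (n : ℕ)
    (X : Matrix (Fin n) (Fin n) ℝ)
    (hXpos : ∀ i j, 0 < X i j)
    (hXrow : X.mulVec (fun _ => (1 : ℝ)) = fun _ => (1 : ℝ))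
    (hXcol : Xᵀ.mulVec (fun _ => (1 : ℝ)) = fun _ => (1 : ℝ))
    (α β : Fin n → ℝ)
    (h1 : α + X.mulVec β = 0)
    (h2 : Xᵀ.mulVec α + β = 0) :
    ∃ c : ℝ, α = (fun _ => c) ∧ β = (fun _ => -c) := by
  rcases Nat.eq_zero_or_pos n with rfl | hn
  · exact ⟨0, funext fun i => i.elim0, funext fun i => i.elim0⟩
  have : Nonempty (Fin n) := ⟨⟨0, hn⟩⟩
  have hβ : β = -(Xᵀ.mulVec α) := by
    have := h2; funext j; have := congrFun h2 j
    simp at this ⊢; linarith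
  have hα : α = -(X.mulVec β) := by
    funext j; have := congrFun h1 j
    simp at this ⊢; linarith
  set Y := X * Xᵀ with hY
  have hYpos : ∀ i j, 0 < Y i j := by
    intro i j
    have : Y i j = ∑ k, X i k * X j k := by
      simp [hY, Matrix.mul_apply, Matrix.transpose_apply]
    rw [this]
    exact Finset.sum_pos (fun k _ => mul_pos (hXpos i k) (hXpos j k)) Finset.univ_nonempty
  have hYrow : Y.mulVec (fun _ => (1 : ℝ)) = fun _ => (1 : ℝ) := by
    rw [hY, ← Matrix.mulVec_mulVec, hXcol, hXrow]
  have hYfix : Y.mulVec α = α := by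
    rw [hY, ← Matrix.mulVec_mulVec]
    have : Xᵀ.mulVec α = -β := by rw [hβ]; simp
    rw [this, Matrix.mulVec_neg, hα]
  have hconst := const_of_fixed_pos_row_stochastic n Y hYpos hYrow α hYfix
  set c := α ⟨0, hn⟩ with hc
  have hαc : α = fun _ => c := funext fun i => hconst i ⟨0, hn⟩
  refine ⟨c, hαc, ?_⟩
  have : Xᵀ.mulVec α = fun _ => c := by
    rw [hαc]
    have : (fun _ : Fin n => c) = c • (fun _ : Fin n => (1 : ℝ)) := by
      funext i; simp
    rw [this, Matrix.mulVec_smul, hXcol]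
  rw [hβ, this]
  funext i; simp
end

section
/- Let X ∈ 𝔻ℙ_n. Then for every Z ∈ ℝ^{n×n} the linear system Z𝟙 = α + Xβ, Zᵀ𝟙 = Xᵀα + β admits at least one solution (α, β) ∈ ℝⁿ × ℝⁿ; equivalently, the vector (Z𝟙, Zᵀ𝟙) lies in the range of the symmetric block matrix [[I, X], [Xᵀ, I]]. -/
open Matrix

local notation "⟪" x ", " y "⟫" => @inner ℝ _ _ x y

lemma exists_preimage_of_symmetric {E : Type*} [NormedAddCommGroup E]
    [InnerProductSpace ℝ E] [FiniteDimensional ℝ E] (T : E →ₗ[ℝ] E)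
    (hT : ∀ x y : E, ⟪T x, y⟫ = ⟪x, T y⟫) (y : E)
    (hy : ∀ v, T v = 0 → ⟪y, v⟫ = 0) : ∃ x, T x = y := by
  set K := LinearMap.range T with hK
  set p : E := K.starProjection y with hp
  have hpK : p ∈ K := K.starProjection_apply_mem y
  have hyp : y - p ∈ Kᗮ := K.sub_starProjection_mem_orthogonal y
  have hT0 : T (y - p) = 0 := by
    have h1 : ⟪T (y - p), T (y - p)⟫ = 0 := by
      rw [hT]
      exact real_inner_comm (T (T (y - p))) (y - p) ▸
        hyp (T (T (y - p))) (LinearMap.mem_range_self T _)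
    exact inner_self_eq_zero.mp h1
  have h2 : ⟪y, y - p⟫ = 0 := hy _ hT0
  have h3 : ⟪p, y - p⟫ = 0 := hyp p hpK
  have h4 : y - p = 0 := by
    have : ⟪y - p, y - p⟫ = 0 := by
      rw [inner_sub_left, h2, h3, sub_zero]
    exact inner_self_eq_zero.mp this
  obtain ⟨x, hx⟩ := hpK
  exact ⟨x, by rw [hx, ← sub_eq_zero.mp h4]⟩

lemma const_of_fixed (n : ℕ) (A : Matrix (Fin n) (Fin n) ℝ)
    (hpos : ∀ i j, 0 < A i j)
    (hrow : A.mulVec (fun _ => (1 : ℝ)) = fun _ => (1 : ℝ))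
    (β : Fin n → ℝ) (h : A.mulVec β = β) : ∀ i j, β i = β j := by
  rcases Nat.eq_zero_or_pos n with h0 | h0
  · subst h0; exact fun i => i.elim0
  have : Nonempty (Fin n) := ⟨⟨0, h0⟩⟩
  obtain ⟨i0, -, hmax⟩ := Finset.exists_max_image Finset.univ β ⟨Classical.arbitrary _, Finset.mem_univ _⟩
  have key : ∀ j, β j = β i0 := by
    intro j
    have hsum1 : ∑ k, A i0 k = 1 := by
      have := congrFun hrow i0
      simpa [mulVec, dotProduct] using this
    have hs : ∑ k, A i0 k * (β i0 - β k) = 0 := by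
      have hb : ∑ k, A i0 k * β k = β i0 := by
        have := congrFun h i0
        simpa [mulVec, dotProduct] using this
      have : ∑ k, A i0 k * (β i0 - β k)
          = (∑ k, A i0 k) * β i0 - ∑ k, A i0 k * β k := by
        simp only [mul_sub]
        rw [Finset.sum_sub_distrib, Finset.sum_mul]
      rw [this, hsum1, hb, one_mul, sub_self]
    have hnn : ∀ k ∈ Finset.univ, 0 ≤ A i0 k * (β i0 - β k) := fun k _ =>
      mul_nonneg (hpos i0 k).le (sub_nonneg.mpr (hmax k (Finset.mem_univ k)))
    have := (Finset.sum_eq_zero_iff_of_nonneg hnn).mp hs j (Finset.mem_univ j)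
    have := (mul_eq_zero.mp this).resolve_left (hpos i0 j).ne'
    linarith [sub_eq_zero.mp this]
  intro i j; rw [key i, key j]

/-- For `X ∈ 𝔻ℙ_n` and any `Z ∈ ℝ^{n×n}`, the linear system
`Z𝟙 = α + Xβ`, `Zᵀ𝟙 = Xᵀα + β` admits at least one solution `(α, β)`;
equivalently, `(Z𝟙, Zᵀ𝟙)` lies in the range of `[[I, X], [Xᵀ, I]]`. -/
theorem block_system_solvable_doubly_stochastic (n : ℕ)
    (X : Matrix (Fin n) (Fin n) ℝ)
    (hXpos : ∀ i j, 0 < X i j)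
    (hXrow : X.mulVec (fun _ => (1 : ℝ)) = fun _ => (1 : ℝ))
    (hXcol : Xᵀ.mulVec (fun _ => (1 : ℝ)) = fun _ => (1 : ℝ))
    (Z : Matrix (Fin n) (Fin n) ℝ) :
    ∃ α β : Fin n → ℝ,
      Z.mulVec (fun _ => (1 : ℝ)) = α + X.mulVec β ∧
      Zᵀ.mulVec (fun _ => (1 : ℝ)) = Xᵀ.mulVec α + β := by
  rcases Nat.eq_zero_or_pos n with h0 | h0
  · subst h0
    exact ⟨0, 0, funext fun i => i.elim0, funext fun i => i.elim0⟩
  set M : Matrix (Fin n ⊕ Fin n) (Fin n ⊕ Fin n) ℝ :=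
    Matrix.fromBlocks 1 X Xᵀ 1 with hM
  have hMsymm : Mᵀ = M := by
    simp [hM, Matrix.fromBlocks_transpose]
  set r : Fin n → ℝ := Z.mulVec (fun _ => (1 : ℝ)) with hr
  set c : Fin n → ℝ := Zᵀ.mulVec (fun _ => (1 : ℝ)) with hc
  set y : EuclideanSpace ℝ (Fin n ⊕ Fin n) := WithLp.toLp 2 (Sum.elim r c) with hy
  let T : EuclideanSpace ℝ (Fin n ⊕ Fin n) →ₗ[ℝ] EuclideanSpace ℝ (Fin n ⊕ Fin n) :=
    Matrix.toEuclideanLin M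
  have hTsym : ∀ x z : EuclideanSpace ℝ (Fin n ⊕ Fin n), ⟪T x, z⟫ = ⟪x, T z⟫ := by
    intro x z
    rw [EuclideanSpace.inner_eq_star_dotProduct, EuclideanSpace.inner_eq_star_dotProduct, star_trivial,
      star_trivial, dotProduct_comm z.ofLp, dotProduct_comm _ x.ofLp]
    show dotProduct (M.mulVec x.ofLp) z.ofLp = dotProduct x.ofLp (M.mulVec z.ofLp)
    rw [dotProduct_comm, Matrix.dotProduct_mulVec, ← Matrix.mulVec_transpose,
      hMsymm, dotProduct_comm]
  have hker : ∀ v : EuclideanSpace ℝ (Fin n ⊕ Fin n), T v = 0 → ⟪y, v⟫ = 0 := by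
    intro v hv
    set a : Fin n → ℝ := v ∘ Sum.inl with ha
    set b : Fin n → ℝ := v ∘ Sum.inr with hb
    have hvab : (v : Fin n ⊕ Fin n → ℝ) = Sum.elim a b := by
      funext s; cases s <;> rfl
    have hv' : M.mulVec (Sum.elim a b) = 0 := by
      rw [← hvab]; have := congrArg WithLp.ofLp hv; simpa [T, Matrix.ofLp_toEuclideanLin_apply] using this
    rw [hM, Matrix.fromBlocks_mulVec] at hv'
    have h1 : a + X.mulVec b = 0 := by
      have := congrArg (fun f => f ∘ Sum.inl) hv'
      funext i
      simpa [Matrix.one_mulVec] using congrFun this i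
    have h2 : Xᵀ.mulVec a + b = 0 := by
      have := congrArg (fun f => f ∘ Sum.inr) hv'
      funext i
      simpa [Matrix.one_mulVec] using congrFun this i
    have ha' : a = -(X.mulVec b) := by
      rw [← neg_eq_of_add_eq_zero_left h1]
    have hbe : b = -(Xᵀ.mulVec a) := by
      rw [← neg_eq_of_add_eq_zero_right h2]
    have hXb : X.mulVec b = -a := by rw [ha', neg_neg]
    have hb' : (Xᵀ * X).mulVec b = b := by
      rw [← Matrix.mulVec_mulVec, hXb, Matrix.mulVec_neg, ← hbe]
    have hApos : ∀ i j, 0 < (Xᵀ * X) i j := by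
      intro i j
      rw [Matrix.mul_apply]
      exact Finset.sum_pos (fun k _ => mul_pos (hXpos k i) (hXpos k j))
        ⟨⟨0, h0⟩, Finset.mem_univ _⟩
    have hArow : (Xᵀ * X).mulVec (fun _ => (1 : ℝ)) = fun _ => (1 : ℝ) := by
      rw [← Matrix.mulVec_mulVec, hXrow, hXcol]
    have hconst := const_of_fixed n (Xᵀ * X) hApos hArow b hb'
    set t : ℝ := b ⟨0, h0⟩ with ht
    have hbt : b = fun _ => t := funext fun j => hconst j ⟨0, h0⟩
    have hat : a = fun _ => -t := by
      rw [ha', hbt]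
      have : X.mulVec (fun _ => t) = fun _ => t := by
        have : (fun (_ : Fin n) => t) = t • (fun (_ : Fin n) => (1:ℝ)) := by
          funext i; simp
        rw [this, Matrix.mulVec_smul, hXrow]
      rw [this]
      funext i; simp
    rw [EuclideanSpace.inner_eq_star_dotProduct, star_trivial, dotProduct_comm]
    show dotProduct (y : Fin n ⊕ Fin n → ℝ) v = 0
    rw [hvab, hy, WithLp.ofLp_toLp]
    have : dotProduct (Sum.elim r c : Fin n ⊕ Fin n → ℝ) (Sum.elim a b)
        = dotProduct r a + dotProduct c b := by
      simp [dotProduct, Fintype.sum_sum_type]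
    rw [this, hat, hbt]
    have hrsum : dotProduct r (fun _ => -t) = -t * ∑ i, ∑ j, Z i j := by
      simp [hr, dotProduct, mulVec, Finset.sum_mul, Finset.mul_sum, mul_comm]
    have hcsum : dotProduct c (fun _ => t) = t * ∑ i, ∑ j, Z i j := by
      rw [Finset.sum_comm (f := fun i j => Z i j)]
      simp [hc, dotProduct, mulVec, Matrix.transpose_apply, Finset.sum_mul,
        Finset.mul_sum, mul_comm]
    rw [hrsum, hcsum]; ring
  obtain ⟨x, hx⟩ := exists_preimage_of_symmetric T hTsym y hker
  have hxab : (x : Fin n ⊕ Fin n → ℝ) = Sum.elim (x ∘ Sum.inl) (x ∘ Sum.inr) := by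
    funext s; cases s <;> rfl
  have hx' : M.mulVec (Sum.elim (x ∘ Sum.inl) (x ∘ Sum.inr)) = Sum.elim r c := by
    rw [← hxab]; have := congrArg WithLp.ofLp hx; simpa [T, Matrix.ofLp_toEuclideanLin_apply, hy] using this
  rw [hM, Matrix.fromBlocks_mulVec] at hx'
  refine ⟨x ∘ Sum.inl, x ∘ Sum.inr, ?_, ?_⟩
  · funext i
    have := congrFun hx' (Sum.inl i)
    simpa [Matrix.one_mulVec, hr] using this.symm
  · funext i
    have := congrFun hx' (Sum.inr i)
    simpa [Matrix.one_mulVec, hc] using this.symm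
end

section
/- Let X ∈ 𝔻ℙ_n. If v ∈ ℝⁿ satisfies X Xᵀ v = v, then v is a scalar multiple of 𝟙; that is, the kernel of I − X Xᵀ is the one-dimensional subspace spanned by the all-ones vector 𝟙. -/
open Matrix

/-- For `X ∈ 𝔻ℙ_n`, the kernel of `I − XXᵀ` is spanned by the all-ones
vector: if `XXᵀv = v` then `v` is a scalar multiple of `𝟙`. -/
theorem ker_one_sub_XXt_doubly_stochastic (n : ℕ)
    (X : Matrix (Fin n) (Fin n) ℝ)
    (hXpos : ∀ i j, 0 < X i j)
    (hXrow : X.mulVec (fun _ => (1 : ℝ)) = fun _ => (1 : ℝ))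
    (hXcol : Xᵀ.mulVec (fun _ => (1 : ℝ)) = fun _ => (1 : ℝ))
    (v : Fin n → ℝ)
    (hv : (X * Xᵀ).mulVec v = v) :
    ∃ c : ℝ, v = c • (fun _ => (1 : ℝ)) := by
  rcases Nat.eq_zero_or_pos n with h0 | hn
  · subst h0
    exact ⟨0, funext fun i => i.elim0⟩
  have : Nonempty (Fin n) := ⟨⟨0, hn⟩⟩
  set A := X * Xᵀ with hA
  have hApos : ∀ i j, 0 < A i j := by
    intro i j
    have hAe : A i j = ∑ k, X i k * X j k := by
      simp [hA, Matrix.mul_apply, Matrix.transpose_apply]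
    rw [hAe]
    exact Finset.sum_pos (fun k _ => mul_pos (hXpos i k) (hXpos j k)) Finset.univ_nonempty
  have hArow : A.mulVec (fun _ => (1 : ℝ)) = fun _ => (1 : ℝ) := by
    rw [hA, ← Matrix.mulVec_mulVec, hXcol, hXrow]
  obtain ⟨i0, hi0⟩ := Finite.exists_max v
  refine ⟨v i0, funext fun j => ?_⟩
  have h1 : ∑ k, A i0 k * v i0 = v i0 := by
    have hr := congrFun hArow i0
    simp only [Matrix.mulVec, dotProduct, mul_one] at hr
    rw [← Finset.sum_mul, hr, one_mul]
  have h2 : ∑ k, A i0 k * v k = v i0 := by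
    have hr := congrFun hv i0
    simpa [Matrix.mulVec, dotProduct, hA] using hr
  have key : ∑ k, A i0 k * (v i0 - v k) = 0 := by
    simp only [mul_sub, Finset.sum_sub_distrib, h1, h2, sub_self]
  have hzero := (Finset.sum_eq_zero_iff_of_nonneg
    (fun k _ => mul_nonneg (hApos i0 k).le (sub_nonneg.2 (hi0 k)))).mp key j
    (Finset.mem_univ j)
  have hvj := (mul_eq_zero.mp hzero).resolve_left (ne_of_gt (hApos i0 j))
  simp only [Pi.smul_apply, smul_eq_mul, mul_one]
  linarith
end

section
/- Let X ∈ 𝕊ℙ_n. Then the matrix I + X is invertible. Moreover, for every symmetric Z ∈ ℝ^{n×n}, setting α = (I + X)⁻¹ Z𝟙, the matrix Π_X(Z) = Z − (α𝟙ᵀ + 𝟙αᵀ) ⊙ X is symmetric and satisfies Π_X(Z)𝟙 = 0, and the residual Z − Π_X(Z) is orthogonal, in the Fisher metric at X, to every symmetric matrix W with W𝟙 = 0. Hence Π_X is the orthogonal projection of the space of symmetric matrices onto the tangent space of 𝕊ℙ_n at X with respect to the Fisher metric. -/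
open Matrix

/-- For `X ∈ 𝕊ℙ_n`, the matrix `I + X` is invertible, and for every symmetric
`Z`, with `α = (I + X)⁻¹ Z𝟙`, the matrix `Π_X(Z) = Z − (α𝟙ᵀ + 𝟙αᵀ) ⊙ X` is a
symmetric tangent vector (`Π_X(Z)𝟙 = 0`) and the residual `Z − Π_X(Z)` is
Fisher-orthogonal to every symmetric `W` with `W𝟙 = 0`.  Hence `Π_X` is the
orthogonal projection onto the tangent space of `𝕊ℙ_n` at `X`. -/
theorem projection_tangent_symmetric_multinomial (n : ℕ)
    (X : Matrix (Fin n) (Fin n) ℝ)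
    (hXpos : ∀ i j, 0 < X i j)
    (hXsym : X = Xᵀ)
    (hXrow : X.mulVec (fun _ => (1 : ℝ)) = fun _ => (1 : ℝ)) :
    IsUnit (1 + X) ∧
    ∀ Z : Matrix (Fin n) (Fin n) ℝ, Z = Zᵀ →
      (Z - Matrix.hadamard
          (Matrix.vecMulVec ((1 + X)⁻¹.mulVec (Z.mulVec (fun _ => (1 : ℝ))))
              (fun _ => (1 : ℝ)) +
            Matrix.vecMulVec (fun _ => (1 : ℝ))
              ((1 + X)⁻¹.mulVec (Z.mulVec (fun _ => (1 : ℝ))))) X) =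
        (Z - Matrix.hadamard
          (Matrix.vecMulVec ((1 + X)⁻¹.mulVec (Z.mulVec (fun _ => (1 : ℝ))))
              (fun _ => (1 : ℝ)) +
            Matrix.vecMulVec (fun _ => (1 : ℝ))
              ((1 + X)⁻¹.mulVec (Z.mulVec (fun _ => (1 : ℝ))))) X)ᵀ ∧
      (Z - Matrix.hadamard
          (Matrix.vecMulVec ((1 + X)⁻¹.mulVec (Z.mulVec (fun _ => (1 : ℝ))))
              (fun _ => (1 : ℝ)) +
            Matrix.vecMulVec (fun _ => (1 : ℝ))
              ((1 + X)⁻¹.mulVec (Z.mulVec (fun _ => (1 : ℝ))))) X).mulVec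
          (fun _ => (1 : ℝ)) = 0 ∧
      ∀ W : Matrix (Fin n) (Fin n) ℝ, W = Wᵀ →
        W.mulVec (fun _ => (1 : ℝ)) = 0 →
        ∑ i, ∑ j,
          ((Matrix.hadamard
            (Matrix.vecMulVec ((1 + X)⁻¹.mulVec (Z.mulVec (fun _ => (1 : ℝ))))
                (fun _ => (1 : ℝ)) +
              Matrix.vecMulVec (fun _ => (1 : ℝ))
                ((1 + X)⁻¹.mulVec (Z.mulVec (fun _ => (1 : ℝ))))) X) i j * W i j)
            / X i j = 0 := by
  have hrow : ∀ k, ∑ j, X k j = 1 := by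
    intro k
    have := congrFun hXrow k
    simpa [Matrix.mulVec, dotProduct] using this
  -- Invertibility via strict diagonal dominance
  have hdet : (1 + X).det ≠ 0 := by
    apply det_ne_zero_of_sum_row_lt_diag
    intro k
    have h1 : ∑ j ∈ Finset.univ.erase k, ‖(1 + X) k j‖ = 1 - X k k := by
      rw [show ∑ j ∈ Finset.univ.erase k, ‖(1 + X) k j‖
          = ∑ j ∈ Finset.univ.erase k, X k j from
        Finset.sum_congr rfl fun j hj => by
          rcases Finset.mem_erase.mp hj with ⟨hne, -⟩
          simp [Matrix.add_apply, Matrix.one_apply, hne.symm, abs_of_pos (hXpos k j)]]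
      rw [Finset.sum_erase_eq_sub (Finset.mem_univ k), hrow k]
    have h2 : ‖(1 + X) k k‖ = 1 + X k k := by
      simp [Matrix.add_apply, Matrix.one_apply,
        abs_of_pos (by linarith [hXpos k k] : (0:ℝ) < 1 + X k k)]
    rw [h1, h2]
    linarith [hXpos k k]
  have hunit : IsUnit (1 + X) := by
    rw [Matrix.isUnit_iff_isUnit_det]
    exact isUnit_iff_ne_zero.mpr hdet
  refine ⟨hunit, fun Z hZsym => ?_⟩
  set o : Fin n → ℝ := fun _ => (1 : ℝ) with ho
  set α : Fin n → ℝ := (1 + X)⁻¹.mulVec (Z.mulVec o) with hα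
  have hkey : (1 + X).mulVec α = Z.mulVec o := by
    rw [hα, Matrix.mulVec_mulVec, Matrix.mul_nonsing_inv _ (isUnit_iff_ne_zero.mpr hdet),
      Matrix.one_mulVec]
  rw [Matrix.add_mulVec, Matrix.one_mulVec] at hkey
  have hkey' : ∀ i, α i + ∑ j, X i j * α j = ∑ j, Z i j := by
    intro i
    have := congrFun hkey i
    simpa [Matrix.mulVec, dotProduct, Pi.add_apply, ho] using this
  refine ⟨?_, ?_, ?_⟩
  · -- symmetry
    ext i j
    have hx := congrFun (congrFun hXsym j) i
    rw [Matrix.transpose_apply] at hx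
    have hz := congrFun (congrFun hZsym j) i
    rw [Matrix.transpose_apply] at hz
    simp only [Matrix.sub_apply, Matrix.transpose_apply, Matrix.hadamard_apply,
      Matrix.add_apply, Matrix.vecMulVec_apply]
    rw [hx, hz]
    ring
  · -- row sums zero
    funext i
    have : ∑ j, (Z i j - (α i * 1 + 1 * α j) * X i j) * 1
        = ∑ j, Z i j - (α i * ∑ j, X i j + ∑ j, X i j * α j) := by
      rw [Finset.mul_sum, ← Finset.sum_add_distrib, ← Finset.sum_sub_distrib]
      exact Finset.sum_congr rfl fun j _ => by ring
    simp only [Matrix.mulVec, dotProduct, Matrix.sub_apply, Matrix.hadamard_apply,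
      Matrix.add_apply, Matrix.vecMulVec_apply, Pi.zero_apply, ho]
    rw [this, hrow i]
    have := hkey' i
    linarith
  · -- orthogonality
    intro W hWsym hWrow
    have hWr : ∀ i, ∑ j, W i j = 0 := by
      intro i
      have := congrFun hWrow i
      simpa [Matrix.mulVec, dotProduct, ho] using this
    have hstep : ∀ i j, ((α i * 1 + 1 * α j) * X i j) * W i j / X i j
        = α i * W i j + α j * W i j := by
      intro i j
      field_simp [(hXpos i j).ne']
    simp only [Matrix.hadamard_apply, Matrix.add_apply, Matrix.vecMulVec_apply, ho]
    rw [Finset.sum_congr rfl fun i _ => Finset.sum_congr rfl fun j _ => hstep i j]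
    rw [Finset.sum_congr rfl fun i (_ : i ∈ Finset.univ) => Finset.sum_add_distrib]
    rw [Finset.sum_add_distrib]
    have h1 : ∑ i, ∑ j, α i * W i j = 0 := by
      refine Finset.sum_eq_zero fun i _ => ?_
      rw [← Finset.mul_sum, hWr i, mul_zero]
    have h2 : ∑ i, ∑ j, α j * W i j = 0 := by
      rw [Finset.sum_comm]
      refine Finset.sum_eq_zero fun j _ => ?_
      have : ∑ i, α j * W i j = α j * ∑ i, W j i := by
        rw [← Finset.mul_sum]
        congr 1
        refine Finset.sum_congr rfl fun i _ => ?_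
        have hw := congrFun (congrFun hWsym i) j
        rw [Matrix.transpose_apply] at hw
        rw [hw]
      rw [this, hWr j, mul_zero]
    rw [h1, h2, add_zero]
end

section
/- Let X ∈ 𝔻ℙ_n and let G ∈ ℝ^{n×n} (the Euclidean gradient of an objective function at X). Suppose α, β ∈ ℝⁿ satisfy (G ⊙ X)𝟙 = α + Xβ and (G ⊙ X)ᵀ𝟙 = Xᵀα + β, and set grad = (G ⊙ X) − (α𝟙ᵀ + 𝟙βᵀ) ⊙ X. Then for every ξ ∈ ℝ^{n×n} with ξ𝟙 = 0 and ξᵀ𝟙 = 0, the Fisher inner product ⟨grad, ξ⟩_X equals the Frobenius inner product Σ_{i,j} G_{ij} ξ_{ij}. In other words, the Riemannian gradient on 𝔻ℙ_n is grad f(X) = Π_X(Grad f(X) ⊙ X). -/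
open Matrix

/-- The Riemannian gradient on `𝔻ℙ_n` is `grad f(X) = Π_X(Grad f(X) ⊙ X)`:
with `α, β` solving the projection system for `Z = G ⊙ X`, the matrix
`grad = (G ⊙ X) − (α𝟙ᵀ + 𝟙βᵀ) ⊙ X` satisfies
`⟨grad, ξ⟩_X = Σ_{i,j} G_{ij} ξ_{ij}` for every tangent vector `ξ`. -/
theorem riemannian_gradient_doubly_stochastic (n : ℕ)
    (X : Matrix (Fin n) (Fin n) ℝ)
    (hXpos : ∀ i j, 0 < X i j)
    (hXrow : X.mulVec (fun _ => (1 : ℝ)) = fun _ => (1 : ℝ))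
    (hXcol : Xᵀ.mulVec (fun _ => (1 : ℝ)) = fun _ => (1 : ℝ))
    (G : Matrix (Fin n) (Fin n) ℝ) (α β : Fin n → ℝ)
    (hα : (Matrix.hadamard G X).mulVec (fun _ => (1 : ℝ)) = α + X.mulVec β)
    (hβ : (Matrix.hadamard G X)ᵀ.mulVec (fun _ => (1 : ℝ)) = Xᵀ.mulVec α + β) :
    ∀ ξ : Matrix (Fin n) (Fin n) ℝ,
      ξ.mulVec (fun _ => (1 : ℝ)) = 0 → ξᵀ.mulVec (fun _ => (1 : ℝ)) = 0 →
      ∑ i, ∑ j,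
        ((Matrix.hadamard G X -
          Matrix.hadamard
            (Matrix.vecMulVec α (fun _ => (1 : ℝ)) +
              Matrix.vecMulVec (fun _ => (1 : ℝ)) β) X) i j * ξ i j) / X i j
        = ∑ i, ∑ j, G i j * ξ i j := by
  intro ξ hr hc
  have hstep : ∀ i j,
      ((Matrix.hadamard G X -
        Matrix.hadamard
          (Matrix.vecMulVec α (fun _ => (1 : ℝ)) +
            Matrix.vecMulVec (fun _ => (1 : ℝ)) β) X) i j * ξ i j) / X i j
      = G i j * ξ i j - (α i * ξ i j + β j * ξ i j) := by
    intro i j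
    have hx : X i j ≠ 0 := (hXpos i j).ne'
    simp only [Matrix.sub_apply, Matrix.hadamard_apply, Matrix.add_apply,
      Matrix.vecMulVec_apply]
    field_simp
  simp only [hstep]
  have hrow : ∀ i, ∑ j, ξ i j = 0 := by
    intro i
    have := congrFun hr i
    simpa [Matrix.mulVec, dotProduct] using this
  have hcol : ∀ j, ∑ i, ξ i j = 0 := by
    intro j
    have := congrFun hc j
    simpa [Matrix.mulVec, dotProduct, Matrix.transpose_apply] using this
  have h1 : ∑ i, ∑ j, (α i * ξ i j + β j * ξ i j) = 0 := by
    have ha : ∑ i, ∑ j, α i * ξ i j = 0 := by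
      simp [← Finset.mul_sum, hrow]
    have hb : ∑ i, ∑ j, β j * ξ i j = 0 := by
      rw [Finset.sum_comm]
      simp [← Finset.mul_sum, hcol]
    simp [Finset.sum_add_distrib, ha, hb]
  simp [Finset.sum_sub_distrib, h1]
end

section
/- Let X ∈ 𝕊ℙ_n and let G ∈ ℝ^{n×n} be symmetric (the Euclidean gradient of an objective function at X). Set α = (I + X)⁻¹ (G ⊙ X)𝟙 and grad = (G ⊙ X) − (α𝟙ᵀ + 𝟙αᵀ) ⊙ X. Then for every symmetric ξ ∈ ℝ^{n×n} with ξ𝟙 = 0, the Fisher inner product ⟨grad, ξ⟩_X equals the Frobenius inner product Σ_{i,j} G_{ij} ξ_{ij}. -/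
open Matrix

/-- The Riemannian gradient on `𝕊ℙ_n`: with `α = (I + X)⁻¹ (G ⊙ X)𝟙` and
`grad = (G ⊙ X) − (α𝟙ᵀ + 𝟙αᵀ) ⊙ X`, one has
`⟨grad, ξ⟩_X = Σ_{i,j} G_{ij} ξ_{ij}` for every symmetric `ξ` with `ξ𝟙 = 0`. -/
theorem riemannian_gradient_symmetric_multinomial (n : ℕ)
    (X : Matrix (Fin n) (Fin n) ℝ)
    (hXpos : ∀ i j, 0 < X i j)
    (hXsym : X = Xᵀ)
    (hXrow : X.mulVec (fun _ => (1 : ℝ)) = fun _ => (1 : ℝ))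
    (G : Matrix (Fin n) (Fin n) ℝ) (hGsym : G = Gᵀ)
    (α : Fin n → ℝ)
    (hα : α = (1 + X)⁻¹.mulVec ((Matrix.hadamard G X).mulVec (fun _ => (1 : ℝ)))) :
    ∀ ξ : Matrix (Fin n) (Fin n) ℝ, ξ = ξᵀ →
      ξ.mulVec (fun _ => (1 : ℝ)) = 0 →
      ∑ i, ∑ j,
        ((Matrix.hadamard G X -
          Matrix.hadamard
            (Matrix.vecMulVec α (fun _ => (1 : ℝ)) +
              Matrix.vecMulVec (fun _ => (1 : ℝ)) α) X) i j * ξ i j) / X i j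
        = ∑ i, ∑ j, G i j * ξ i j := by
  intro ξ hξsym hξrow
  have hrow : ∀ i, ∑ j, ξ i j = 0 := by
    intro i
    have := congrFun hξrow i
    simpa [Matrix.mulVec, dotProduct] using this
  have hcol : ∀ j, ∑ i, ξ i j = 0 := by
    intro j
    have : ∑ i, ξ i j = ∑ i, ξ j i := by
      refine Finset.sum_congr rfl fun i _ => ?_
      conv_lhs => rw [hξsym]
      rfl
    rw [this, hrow]
  have key : ∀ i j,
      ((Matrix.hadamard G X -
        Matrix.hadamard
          (Matrix.vecMulVec α (fun _ => (1 : ℝ)) +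
            Matrix.vecMulVec (fun _ => (1 : ℝ)) α) X) i j * ξ i j) / X i j
      = G i j * ξ i j - (α i + α j) * ξ i j := by
    intro i j
    have hX := (hXpos i j).ne'
    simp only [Matrix.sub_apply, Matrix.hadamard_apply, Matrix.add_apply,
      Matrix.vecMulVec_apply]
    field_simp
  simp only [key, Finset.sum_sub_distrib]
  have : ∑ i, ∑ j, (α i + α j) * ξ i j = 0 := by
    simp only [add_mul, Finset.sum_add_distrib]
    rw [Finset.sum_comm (f := fun i j => α j * ξ i j)]
    simp [← Finset.mul_sum, hrow, hcol]
  rw [this, sub_zero]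
end
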